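/- Let $(A,\mathfrak{m})$ be a Noetherian local ring, $I$ an ideal, $J = (x_1, x_2, x_3) \subseteq I$ with $x_1, x_2, x_3$ an $A$-regular sequence, and suppose $I^2 \cap J = JI$. Then in the complex $0 \to A/\mathfrak{m} \xrightarrow{\alpha_3} (I/\mathfrak{m} I)^3 \xrightarrow{\alpha_2} (I^2/\mathfrak{m} I^2)^3 \xrightarrow{\alpha_1} I^2 J/\mathfrak{m} I^2 J \to 0$ (built from the Koszul maps on $x_1,x_2,x_3$), one has $\operatorname{image}(\alpha_2) = \ker(\alpha_1)$. -/

import Mathlib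

/-!
STATEMENT 3: (A,m) Noetherian local, I an ideal, J = (x₁,x₂,x₃) ⊆ I with
x₁,x₂,x₃ an A-regular sequence, and I² ∩ J = JI.  Then in the complex
  0 → A/m --α₃--> (I/mI)³ --α₂--> (I²/mI²)³ --α₁--> I²J/mI²J → 0,
  α₂(ā,b̄,c̄) = (-x₂a - x₃b, x₁a - x₃c, x₁b + x₂c),
  α₁(ā,b̄,c̄) = x₁a + x₂b + x₃c,
one has image(α₂) = ker(α₁).  (Stated element-wise on representatives;
both inclusions.)
-/

open IsLocalRing

section Helpers

variable {A : Type*} [CommRing A]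

lemma regAux {x : A} {S : Submodule A A} (h : IsSMulRegular (A ⧸ S) x)
    {t : A} (ht : x * t ∈ S) : t ∈ S := by
  have h0 : x • (Submodule.Quotient.mk t : A ⧸ S) = x • (Submodule.Quotient.mk (0:A)) := by
    rw [← Submodule.Quotient.mk_smul, ← Submodule.Quotient.mk_smul]
    exact (Submodule.Quotient.eq _).mpr (by simpa using ht)
  have := (Submodule.Quotient.eq S).mp (h h0)
  simpa using this

lemma regFact {x₁ x₂ x₃ : A} (hreg : RingTheory.Sequence.IsWeaklyRegular A [x₁,x₂,x₃]) :
    (∀ t : A, x₁ * t = 0 → t = 0) ∧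
    (∀ t : A, x₂ * t ∈ Ideal.span {x₁} → t ∈ Ideal.span {x₁}) ∧
    (∀ t : A, x₃ * t ∈ Ideal.span {x₁, x₂} → t ∈ Ideal.span {x₁, x₂}) := by
  obtain ⟨h⟩ := hreg
  have h0 := h 0 (by norm_num)
  have h1 := h 1 (by norm_num)
  have h2 := h 2 (by norm_num)
  simp only [List.take, List.getElem_cons_zero, List.getElem_cons_succ] at h0 h1 h2
  have e0 : (Ideal.ofList ([] : List A) • ⊤ : Submodule A A) = ⊥ := by simp
  have e1 : (Ideal.ofList [x₁] • ⊤ : Submodule A A) = Ideal.span {x₁} := by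
    simp [smul_eq_mul, Ideal.mul_top]
  have e2 : (Ideal.ofList [x₁, x₂] • ⊤ : Submodule A A) = Ideal.span {x₁, x₂} := by
    simp [smul_eq_mul, Ideal.mul_top, Ideal.span_insert]
  change IsSMulRegular (A ⧸ (Ideal.ofList ([] : List A) • ⊤ : Submodule A A)) x₁ at h0
  change IsSMulRegular (A ⧸ (Ideal.ofList [x₁] • ⊤ : Submodule A A)) x₂ at h1
  change IsSMulRegular (A ⧸ (Ideal.ofList [x₁, x₂] • ⊤ : Submodule A A)) x₃ at h2
  rw [e0] at h0; rw [e1] at h1; rw [e2] at h2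
  refine ⟨fun t ht => ?_, fun t ht => regAux h1 ht, fun t ht => regAux h2 ht⟩
  have := regAux h0 (by simpa using ht)
  simpa using this

lemma syzygy {x₁ x₂ x₃ u v w : A}
    (hreg : RingTheory.Sequence.IsWeaklyRegular A [x₁,x₂,x₃])
    (hrel : x₁*u + x₂*v + x₃*w = 0) :
    ∃ p q r : A, u = x₂*p + x₃*q ∧ v = -(x₁*p) + x₃*r ∧ w = -(x₁*q) - x₂*r := by
  obtain ⟨r1, r2, r3⟩ := regFact hreg
  have hw : x₃ * w ∈ Ideal.span {x₁, x₂} := by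
    rw [Ideal.mem_span_pair]
    exact ⟨-u, -v, by linear_combination -hrel⟩
  obtain ⟨m, n, hmn⟩ := Ideal.mem_span_pair.mp (r3 w hw)
  have hv : x₂ * (v + x₃*n) ∈ Ideal.span {x₁} := by
    rw [Ideal.mem_span_singleton']
    exact ⟨-(u + x₃*m), by linear_combination -hrel - x₃ * hmn⟩
  obtain ⟨k, hk⟩ := Ideal.mem_span_singleton'.mp (r2 _ hv)
  have hu : u = x₂*(-k) + x₃*(-m) := by
    have h0 : x₁ * (u + x₃*m + x₂*k) = 0 := by
      linear_combination hrel + x₃ * hmn + x₂ * hk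
    have := r1 _ h0
    linear_combination this
  exact ⟨-k, -m, -n, hu, by linear_combination -hk, by linear_combination -hmn⟩

lemma decomp {x₁ x₂ x₃ : A} {K : Ideal A} {z : A}
    (hz : z ∈ Ideal.span {x₁, x₂, x₃} * K) :
    ∃ u ∈ K, ∃ v ∈ K, ∃ w ∈ K, z = x₁*u + x₂*v + x₃*w := by
  refine Submodule.mul_induction_on hz (fun j hj n hn => ?_) (fun p q ihp ihq => ?_)
  · rw [Ideal.mem_span_insert] at hj
    obtain ⟨c₁, z₁, hz₁, rfl⟩ := hj
    rw [Ideal.mem_span_insert] at hz₁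
    obtain ⟨c₂, z₂, hz₂, rfl⟩ := hz₁
    obtain ⟨c₃, rfl⟩ := Ideal.mem_span_singleton'.mp hz₂
    exact ⟨c₁*n, K.mul_mem_left _ hn, c₂*n, K.mul_mem_left _ hn,
      c₃*n, K.mul_mem_left _ hn, by ring⟩
  · obtain ⟨u₁, hu₁, v₁, hv₁, w₁, hw₁, h₁⟩ := ihp
    obtain ⟨u₂, hu₂, v₂, hv₂, w₂, hw₂, h₂⟩ := ihq
    exact ⟨u₁+u₂, K.add_mem hu₁ hu₂, v₁+v₂, K.add_mem hv₁ hv₂,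
      w₁+w₂, K.add_mem hw₁ hw₂, by rw [h₁, h₂]; ring⟩

end Helpers

theorem stmt3 {A : Type*} [CommRing A] [IsNoetherianRing A] [IsLocalRing A]
    (I : Ideal A) (x₁ x₂ x₃ : A) (hx₁ : x₁ ∈ I) (hx₂ : x₂ ∈ I) (hx₃ : x₃ ∈ I)
    (hreg : RingTheory.Sequence.IsRegular A [x₁, x₂, x₃])
    (hVV : I ^ 2 ⊓ Ideal.span {x₁, x₂, x₃} = Ideal.span {x₁, x₂, x₃} * I) :
    (letI m := maximalIdeal A
     letI J := Ideal.span {x₁, x₂, x₃}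
     -- image α₂ ⊆ ker α₁ :
     (∀ f g h : A, f ∈ I → g ∈ I → h ∈ I →
        x₁ * (-(x₂ * f) - x₃ * g) + x₂ * (x₁ * f - x₃ * h) + x₃ * (x₁ * g + x₂ * h)
          ∈ m * (I ^ 2 * J)) ∧
     -- ker α₁ ⊆ image α₂ :
     (∀ a ∈ I ^ 2, ∀ b ∈ I ^ 2, ∀ c ∈ I ^ 2,
        x₁ * a + x₂ * b + x₃ * c ∈ m * (I ^ 2 * J) →
        ∃ f g h : A, f ∈ I ∧ g ∈ I ∧ h ∈ I ∧
          a - (-(x₂ * f) - x₃ * g) ∈ m * I ^ 2 ∧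
          b - (x₁ * f - x₃ * h) ∈ m * I ^ 2 ∧
          c - (x₁ * g + x₂ * h) ∈ m * I ^ 2)) := by
  have hwr := hreg.toIsWeaklyRegular
  constructor
  · intro f g h _ _ _
    have : x₁ * (-(x₂ * f) - x₃ * g) + x₂ * (x₁ * f - x₃ * h) + x₃ * (x₁ * g + x₂ * h)
        = 0 := by ring
    rw [this]
    exact zero_mem _
  · intro a ha b hb c hc hs
    have hJm : maximalIdeal A * (I ^ 2 * Ideal.span {x₁, x₂, x₃})
        = Ideal.span {x₁, x₂, x₃} * (maximalIdeal A * I ^ 2) := by ring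
    rw [hJm] at hs
    obtain ⟨a', ha', b', hb', c', hc', heq⟩ := decomp hs
    obtain ⟨p, q, r, hu, hv, hw⟩ := syzygy hwr
      (show x₁*(a-a') + x₂*(b-b') + x₃*(c-c') = 0 by linear_combination heq)
    have hmI2 : maximalIdeal A * I ^ 2 ≤ I ^ 2 := Ideal.mul_le_right
    have hmx₁ : x₁ ∈ Ideal.span {x₁, x₂, x₃} := Ideal.subset_span (by simp)
    have hmx₂ : x₂ ∈ Ideal.span {x₁, x₂, x₃} := Ideal.subset_span (by simp)
    have hmx₃ : x₃ ∈ Ideal.span {x₁, x₂, x₃} := Ideal.subset_span (by simp)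
    -- p, q ∈ I
    have huJI : a - a' ∈ Ideal.span {x₁, x₂, x₃} * I := by
      rw [← hVV]
      refine Submodule.mem_inf.mpr ⟨sub_mem ha (hmI2 ha'), ?_⟩
      rw [hu]
      exact add_mem (Ideal.mul_mem_right _ _ hmx₂) (Ideal.mul_mem_right _ _ hmx₃)
    obtain ⟨g₁, hg₁, g₂, hg₂, g₃, hg₃, hdec⟩ := decomp huJI
    obtain ⟨p', q', r', _, h2', h3'⟩ := syzygy hwr
      (show x₁*g₁ + x₂*(g₂ - p) + x₃*(g₃ - q) = 0 by linear_combination hu - hdec)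
    have hpI : p ∈ I := by
      have : p = g₂ + x₁*p' - x₃*r' := by linear_combination -h2'
      rw [this]
      exact sub_mem (add_mem hg₂ (Ideal.mul_mem_right _ _ hx₁)) (Ideal.mul_mem_right _ _ hx₃)
    have hqI : q ∈ I := by
      have : q = g₃ + x₁*q' + x₂*r' := by linear_combination -h3'
      rw [this]
      exact add_mem (add_mem hg₃ (Ideal.mul_mem_right _ _ hx₁)) (Ideal.mul_mem_right _ _ hx₂)
    -- r ∈ I
    have hwJI : c - c' ∈ Ideal.span {x₁, x₂, x₃} * I := by
      rw [← hVV]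
      refine Submodule.mem_inf.mpr ⟨sub_mem hc (hmI2 hc'), ?_⟩
      rw [hw]
      exact sub_mem (neg_mem (Ideal.mul_mem_right _ _ hmx₁)) (Ideal.mul_mem_right _ _ hmx₂)
    obtain ⟨h₁, hh₁, h₂, hh₂, h₃, hh₃, hdec2⟩ := decomp hwJI
    obtain ⟨p'', q'', r'', _, h2'', _⟩ := syzygy hwr
      (show x₁*(h₁ + q) + x₂*(h₂ + r) + x₃*h₃ = 0 by linear_combination hw - hdec2)
    have hrI : r ∈ I := by
      have : r = -h₂ - x₁*p'' + x₃*r'' := by linear_combination h2''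
      rw [this]
      exact add_mem (sub_mem (neg_mem hh₂) (Ideal.mul_mem_right _ _ hx₁))
        (Ideal.mul_mem_right _ _ hx₃)
    refine ⟨-p, -q, -r, neg_mem hpI, neg_mem hqI, neg_mem hrI, ?_, ?_, ?_⟩
    · have : a - (-(x₂ * -p) - x₃ * -q) = a' := by linear_combination hu
      rw [this]; exact ha'
    · have : b - (x₁ * -p - x₃ * -r) = b' := by linear_combination hv
      rw [this]; exact hb'
    · have : c - (x₁ * -q + x₂ * -r) = c' := by linear_combination hw
      rw [this]; exact hc'
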